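/- For all p, n ∈ [0,1] and all a ∈ [0,1], the capacity of the induced binary asymmetric channel M₁ is at most the capacity of the induced binary symmetric channel M₂: h((1−pn) − a(1−p)) − (1−a)·h(pn) − a·h(p(1−n)) ≤ 1 − h((1 − √(1−p))/2). -/

import Mathlib

/-- The binary entropy function in base 2 (with the convention `h(0) = h(1) = 0`,
using `Real.logb 2 0 = 0`). -/
noncomputable def binH (x : ℝ) : ℝ := -(x * Real.logb 2 x) - (1 - x) * Real.logb 2 (1 - x)

set_option maxHeartbeats 1000000

namespace BACaux
open Real Set

/-- Generic helper: if `f 0 = 0` and `f` has nonneg derivative on `[0, b)`, then `f x ≥ 0`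
for `x ∈ [0, b)`. -/
lemma nonneg_of_deriv {f g : ℝ → ℝ} {b : ℝ}
    (hf0 : f 0 = 0)
    (hder : ∀ t, 0 ≤ t → t < b → HasDerivAt f (g t) t)
    (hg : ∀ t, 0 ≤ t → t < b → 0 ≤ g t)
    {x : ℝ} (hx0 : 0 ≤ x) (hxb : x < b) : 0 ≤ f x := by
  rcases eq_or_lt_of_le hx0 with h | h
  · simp [← h, hf0]
  have mono : MonotoneOn f (Icc 0 x) := by
    apply monotoneOn_of_deriv_nonneg (convex_Icc 0 x)
    · intro t ht
      exact (hder t ht.1 (lt_of_le_of_lt ht.2 hxb)).continuousAt.continuousWithinAt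
    · intro t ht
      rw [interior_Icc] at ht
      exact ((hder t ht.1.le (ht.2.trans hxb)).differentiableAt).differentiableWithinAt
    · intro t ht
      rw [interior_Icc] at ht
      rw [(hder t ht.1.le (ht.2.trans hxb)).deriv]
      exact hg t ht.1.le (ht.2.trans hxb)
  have h2 := mono (left_mem_Icc.2 hx0) (right_mem_Icc.2 hx0) hx0
  rw [hf0] at h2
  exact h2

lemma log1p_le_poly5 {x : ℝ} (hx : 0 ≤ x) :
    log (1 + x) ≤ x - x^2/2 + x^3/3 - x^4/4 + x^5/5 := by
  have key : 0 ≤ x - x^2/2 + x^3/3 - x^4/4 + x^5/5 - log (1 + x) := by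
    apply nonneg_of_deriv (b := x + 1)
      (g := fun t => t^5 / (1 + t)) (hx0 := hx) (hxb := lt_add_one x)
    · simp
    · intro t ht _
      have h1t : (0:ℝ) < 1 + t := by linarith
      have hlog : HasDerivAt (fun s : ℝ => log (1 + s)) (1 / (1 + t)) t := by
        have h1 : HasDerivAt (fun s : ℝ => 1 + s) 1 t := (hasDerivAt_id t).const_add 1
        simpa using h1.log h1t.ne'
      have hpoly : HasDerivAt (fun s : ℝ => s - s^2/2 + s^3/3 - s^4/4 + s^5/5)
          (1 - 2*t/2 + 3*t^2/3 - 4*t^3/4 + 5*t^4/5) t := by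
        have := ((((hasDerivAt_id t).sub ((hasDerivAt_pow 2 t).div_const 2)).add
          ((hasDerivAt_pow 3 t).div_const 3)).sub ((hasDerivAt_pow 4 t).div_const 4)).add
          ((hasDerivAt_pow 5 t).div_const 5)
        refine this.congr_deriv ?_
        norm_num
      have := hpoly.sub hlog
      refine this.congr_deriv ?_
      field_simp
      ring
    · intro t ht _
      positivity
  linarith

lemma poly3_le_neg_log {t : ℝ} (h0 : 0 ≤ t) (h1 : t < 1) :
    t + t^2/2 + t^3/3 ≤ -log (1 - t) := by
  have key : 0 ≤ -log (1 - t) - (t + t^2/2 + t^3/3) := by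
    apply nonneg_of_deriv (b := 1) (g := fun s => s^3 / (1 - s)) (hx0 := h0) (hxb := h1)
    · simp
    · intro s hs0 hs1
      have h1s : (0:ℝ) < 1 - s := by linarith
      have hlog : HasDerivAt (fun u : ℝ => -log (1 - u)) (1 / (1 - s)) s := by
        have h1 : HasDerivAt (fun u : ℝ => 1 - u) (-1) s := by
          simpa using (hasDerivAt_id s).const_sub 1
        have := (h1.log h1s.ne').neg
        refine this.congr_deriv ?_
        field_simp
      have hpoly : HasDerivAt (fun u : ℝ => u + u^2/2 + u^3/3) (1 + 2*s/2 + 3*s^2/3) s := by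
        have := ((hasDerivAt_id s).add ((hasDerivAt_pow 2 s).div_const 2)).add
          ((hasDerivAt_pow 3 s).div_const 3)
        refine this.congr_deriv ?_
        norm_num
      have := hlog.sub hpoly
      refine this.congr_deriv ?_
      field_simp
      ring
    · intro s hs0 hs1
      have h1s : (0:ℝ) < 1 - s := by linarith
      positivity
  linarith

lemma neg_log_le_poly3_tail {t : ℝ} (h0 : 0 ≤ t) (h1 : t < 1) :
    -log (1 - t) ≤ t + t^2/2 + t^3/3 + t^4/(4*(1-t)) := by
  have key : 0 ≤ t + t^2/2 + t^3/3 + t^4/(4*(1-t)) + log (1 - t) := by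
    apply nonneg_of_deriv (b := 1)
      (g := fun s => s^3*(4-3*s)/(4*(1-s)^2) - s^3/(1-s)) (hx0 := h0) (hxb := h1)
    · simp
    · intro s hs0 hs1
      have h1s : (0:ℝ) < 1 - s := by linarith
      have hlog : HasDerivAt (fun u : ℝ => log (1 - u)) (-(1 / (1 - s))) s := by
        have h1 : HasDerivAt (fun u : ℝ => 1 - u) (-1) s := by
          simpa using (hasDerivAt_id s).const_sub 1
        have := h1.log h1s.ne'
        convert this using 1
        field_simp
      have hpoly : HasDerivAt (fun u : ℝ => u + u^2/2 + u^3/3) (1 + 2*s/2 + 3*s^2/3) s := by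
        have := ((hasDerivAt_id s).add ((hasDerivAt_pow 2 s).div_const 2)).add
          ((hasDerivAt_pow 3 s).div_const 3)
        refine this.congr_deriv ?_
        norm_num
      have htail : HasDerivAt (fun u : ℝ => u^4/(4*(1-u))) (s^3*(4-3*s)/(4*(1-s)^2)) s := by
        have hnum : HasDerivAt (fun u : ℝ => u^4) (4*s^3) s := by
          simpa using hasDerivAt_pow 4 s
        have hden : HasDerivAt (fun u : ℝ => 4*(1-u)) (-4) s := by
          have h1 : HasDerivAt (fun u : ℝ => 1 - u) (-1) s := by
            simpa using (hasDerivAt_id s).const_sub 1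
          simpa using h1.const_mul 4
        have hden0 : 4*(1-s) ≠ 0 := by positivity
        have := hnum.div hden hden0
        refine this.congr_deriv ?_
        field_simp
        ring
      have := (hpoly.add htail).add hlog
      refine this.congr_deriv ?_
      have h4 : (4:ℝ)*(1-s)^2 ≠ 0 := by positivity
      field_simp
      ring
    · intro s hs0 hs1
      have h1s : (0:ℝ) < 1 - s := by linarith
      show 0 ≤ s^3*(4-3*s)/(4*(1-s)^2) - s^3/(1-s)
      have heq : s^3*(4-3*s)/(4*(1-s)^2) - s^3/(1-s) = s^3*s/(4*(1-s)^2) := by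
        field_simp
        ring
      rw [heq]
      positivity
  linarith

/-- `exp v ≤ 1 + v + v²/2` for `v ≤ 0`. -/
lemma exp_le_quad_of_nonpos {v : ℝ} (hv : v ≤ 0) : exp v ≤ 1 + v + v^2/2 := by
  have key : 0 ≤ 1 - (-v) + (-v)^2/2 - exp (-(-v)) := by
    apply nonneg_of_deriv (f := fun s => 1 - s + s^2/2 - exp (-s)) (b := (-v) + 1)
      (g := fun s => s - 1 + exp (-s)) (hx0 := by linarith) (hxb := lt_add_one _)
    · simp
    · intro s hs0 _
      have hexp : HasDerivAt (fun u : ℝ => exp (-u)) (-exp (-s)) s := by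
        have h1 : HasDerivAt (fun u : ℝ => -u) (-1) s := (hasDerivAt_id s).neg
        simpa using h1.exp
      have hpoly : HasDerivAt (fun u : ℝ => 1 - u + u^2/2) (-1 + 2*s/2) s := by
        have := (((hasDerivAt_id s).const_sub 1)).add ((hasDerivAt_pow 2 s).div_const 2)
        refine this.congr_deriv ?_
        norm_num
      have := hpoly.sub hexp
      refine this.congr_deriv ?_
      ring
    · intro s hs0 _
      show 0 ≤ s - 1 + exp (-s)
      have := add_one_le_exp (-s)
      linarith
  have hvv : -(-v) = v := by ring
  rw [hvv] at key
  nlinarith [key]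

/-- series lower bound for `log ((1+t)/(1-t))`. -/
lemma atanh_series {t : ℝ} (h0 : 0 ≤ t) (h1 : t < 1) :
    2*(t + t^3/3 + t^5/5 + t^7/7 + t^9/9) ≤ log (1+t) - log (1-t) := by
  have key : 0 ≤ log (1+t) - log (1-t) - 2*(t + t^3/3 + t^5/5 + t^7/7 + t^9/9) := by
    apply nonneg_of_deriv (b := 1)
      (g := fun s => 2*s^10/(1-s^2)) (hx0 := h0) (hxb := h1)
    · simp
    · intro s hs0 hs1
      have h1s : (0:ℝ) < 1 - s := by linarith
      have h1s' : (0:ℝ) < 1 + s := by linarith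
      have hlog1 : HasDerivAt (fun u : ℝ => log (1 + u)) (1 / (1 + s)) s := by
        have h1 : HasDerivAt (fun u : ℝ => 1 + u) 1 s := (hasDerivAt_id s).const_add 1
        simpa using h1.log h1s'.ne'
      have hlog2 : HasDerivAt (fun u : ℝ => log (1 - u)) (-(1 / (1 - s))) s := by
        have h1 : HasDerivAt (fun u : ℝ => 1 - u) (-1) s := by
          simpa using (hasDerivAt_id s).const_sub 1
        have := h1.log h1s.ne'
        convert this using 1
        field_simp
      have hpoly : HasDerivAt
          (fun u : ℝ => 2*(u + u^3/3 + u^5/5 + u^7/7 + u^9/9))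
          (2*(1 + 3*s^2/3 + 5*s^4/5 + 7*s^6/7 + 9*s^8/9)) s := by
        have := (((((hasDerivAt_id s).add ((hasDerivAt_pow 3 s).div_const 3)).add
          ((hasDerivAt_pow 5 s).div_const 5)).add ((hasDerivAt_pow 7 s).div_const 7)).add
          ((hasDerivAt_pow 9 s).div_const 9)).const_mul 2
        exact this.congr_deriv (by push_cast; ring)
      have := (hlog1.sub hlog2).sub hpoly
      refine this.congr_deriv ?_
      have hne : (1:ℝ)-s^2 ≠ 0 := by nlinarith
      field_simp
      ring
    · intro s hs0 hs1
      have h1s : (0:ℝ) < 1 - s^2 := by nlinarith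
      positivity
  linarith

/-- series lower bound for `g(t) = (1+t)log(1+t) + (1-t)log(1-t)`. -/
lemma ge_series {t : ℝ} (h0 : 0 ≤ t) (h1 : t < 1) :
    t^2 + t^4/6 + t^6/15 + t^8/28 + t^10/45 ≤ (1+t)*log (1+t) + (1-t)*log (1-t) := by
  have key : 0 ≤ (1+t)*log (1+t) + (1-t)*log (1-t)
      - (t^2 + t^4/6 + t^6/15 + t^8/28 + t^10/45) := by
    apply nonneg_of_deriv (b := 1)
      (g := fun s => (log (1+s) - log (1-s)) - 2*(s + s^3/3 + s^5/5 + s^7/7 + s^9/9))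
      (hx0 := h0) (hxb := h1)
    · simp
    · intro s hs0 hs1
      have h1s : (0:ℝ) < 1 - s := by linarith
      have h1s' : (0:ℝ) < 1 + s := by linarith
      have hA : HasDerivAt (fun u : ℝ => (1+u)*log (1+u)) (log (1+s) + 1) s := by
        have h1 : HasDerivAt (fun u : ℝ => 1 + u) 1 s := (hasDerivAt_id s).const_add 1
        have hl : HasDerivAt (fun u : ℝ => log (1 + u)) (1 / (1 + s)) s := by
          simpa using h1.log h1s'.ne'
        have := h1.mul hl
        refine this.congr_deriv ?_
        field_simp
      have hB : HasDerivAt (fun u : ℝ => (1-u)*log (1-u)) (-log (1-s) - 1) s := by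
        have h1 : HasDerivAt (fun u : ℝ => 1 - u) (-1) s := by
          simpa using (hasDerivAt_id s).const_sub 1
        have hl : HasDerivAt (fun u : ℝ => log (1 - u)) (-(1 / (1 - s))) s := by
          have := h1.log h1s.ne'
          convert this using 1
          field_simp
        have := h1.mul hl
        refine this.congr_deriv ?_
        field_simp
        ring
      have hpoly : HasDerivAt
          (fun u : ℝ => u^2 + u^4/6 + u^6/15 + u^8/28 + u^10/45)
          (2*s + 4*s^3/6 + 6*s^5/15 + 8*s^7/28 + 10*s^9/45) s := by
        have := ((((hasDerivAt_pow 2 s).add ((hasDerivAt_pow 4 s).div_const 6)).add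
          ((hasDerivAt_pow 6 s).div_const 15)).add ((hasDerivAt_pow 8 s).div_const 28)).add
          ((hasDerivAt_pow 10 s).div_const 45)
        refine this.congr_deriv ?_
        norm_num
      have := (hA.add hB).sub hpoly
      refine this.congr_deriv ?_
      ring
    · intro s hs0 hs1
      have := atanh_series hs0 hs1
      show 0 ≤ (log (1+s) - log (1-s)) - 2*(s + s^3/3 + s^5/5 + s^7/7 + s^9/9)
      linarith
  linarith

/-- monotonicity of `binEntropy p / (1-p)`. -/
lemma binEntropy_div_mono {p₁ p₂ : ℝ} (h0 : 0 < p₁) (h12 : p₁ ≤ p₂) (h1 : p₂ < 1) :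
    binEntropy p₁ / (1 - p₁) ≤ binEntropy p₂ / (1 - p₂) := by
  have mono : MonotoneOn (fun p => binEntropy p / (1 - p)) (Icc p₁ p₂) := by
    apply monotoneOn_of_deriv_nonneg (convex_Icc p₁ p₂)
    · intro t ht
      have ht0 : 0 < t := lt_of_lt_of_le h0 ht.1
      have ht1 : t < 1 := lt_of_le_of_lt ht.2 h1
      have hd : HasDerivAt (fun p => binEntropy p / (1 - p)) (-log t / (1-t)^2) t := by
        have hb := Real.hasDerivAt_binEntropy ht0.ne' ht1.ne
        have h1t : HasDerivAt (fun u : ℝ => 1 - u) (-1) t := by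
          simpa using (hasDerivAt_id t).const_sub 1
        have hne : (1:ℝ) - t ≠ 0 := by linarith
        have := hb.div h1t hne
        refine this.congr_deriv ?_
        simp only [Real.binEntropy, log_inv]
        field_simp
        ring
      exact hd.continuousAt.continuousWithinAt
    · intro t ht
      rw [interior_Icc] at ht
      have ht0 : 0 < t := lt_of_lt_of_le h0 ht.1.le
      have ht1 : t < 1 := ht.2.trans h1
      have hb := Real.hasDerivAt_binEntropy ht0.ne' ht1.ne
      have h1t : HasDerivAt (fun u : ℝ => 1 - u) (-1) t := by
        simpa using (hasDerivAt_id t).const_sub 1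
      have hne : (1:ℝ) - t ≠ 0 := by linarith
      exact (hb.div h1t hne).differentiableAt.differentiableWithinAt
    · intro t ht
      rw [interior_Icc] at ht
      have ht0 : 0 < t := lt_of_lt_of_le h0 ht.1.le
      have ht1 : t < 1 := ht.2.trans h1
      have hd : HasDerivAt (fun p => binEntropy p / (1 - p)) (-log t / (1-t)^2) t := by
        have hb := Real.hasDerivAt_binEntropy ht0.ne' ht1.ne
        have h1t : HasDerivAt (fun u : ℝ => 1 - u) (-1) t := by
          simpa using (hasDerivAt_id t).const_sub 1
        have hne : (1:ℝ) - t ≠ 0 := by linarith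
        have := hb.div h1t hne
        refine this.congr_deriv ?_
        simp only [Real.binEntropy, log_inv]
        field_simp
        ring
      rw [hd.deriv]
      have hlt : log t ≤ 0 := log_nonpos ht0.le ht1.le
      have h1t : (0:ℝ) < 1 - t := by linarith
      apply div_nonneg (by linarith) (by positivity)
  exact mono (left_mem_Icc.2 h12) (right_mem_Icc.2 h12) h12

lemma binEntropy_expand (x : ℝ) : binEntropy x = -(x * log x) - (1-x) * log (1-x) := by
  simp only [Real.binEntropy, log_inv]
  ring

/-- Gibbs' inequality. -/
lemma gibbs {ξ w : ℝ} (h0 : 0 ≤ ξ) (h1 : ξ ≤ 1) (hw0 : 0 < w) (hw1 : w < 1) :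
    binEntropy ξ ≤ -(ξ * log w) - (1-ξ) * log (1-w) := by
  have h1w : (0:ℝ) < 1 - w := by linarith
  rcases eq_or_lt_of_le h0 with h | hξ0
  · rw [← h]
    simp only [binEntropy_zero]
    nlinarith [log_nonpos hw0.le hw1.le, log_nonpos h1w.le (by linarith : 1-w ≤ 1)]
  rcases eq_or_lt_of_le h1 with h | hξ1
  · rw [h]
    simp only [binEntropy_one]
    nlinarith [log_nonpos hw0.le hw1.le, log_nonpos h1w.le (by linarith : 1-w ≤ 1)]
  have h1ξ : (0:ℝ) < 1 - ξ := by linarith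
  rw [binEntropy_expand]
  have k1 : log (w/ξ) ≤ w/ξ - 1 := log_le_sub_one_of_pos (by positivity)
  have k2 : log ((1-w)/(1-ξ)) ≤ (1-w)/(1-ξ) - 1 := log_le_sub_one_of_pos (by positivity)
  have e1 : log (w/ξ) = log w - log ξ := log_div hw0.ne' hξ0.ne'
  have e2 : log ((1-w)/(1-ξ)) = log (1-w) - log (1-ξ) := log_div h1w.ne' h1ξ.ne'
  rw [e1] at k1
  rw [e2] at k2
  have k1' : ξ * (log w - log ξ) ≤ ξ * (w/ξ - 1) := by
    exact mul_le_mul_of_nonneg_left k1 h0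
  have k2' : (1-ξ) * (log (1-w) - log (1-ξ)) ≤ (1-ξ) * ((1-w)/(1-ξ) - 1) := by
    exact mul_le_mul_of_nonneg_left k2 h1ξ.le
  have e3 : ξ * (w/ξ - 1) = w - ξ := by field_simp
  have e4 : (1-ξ) * ((1-w)/(1-ξ) - 1) = ξ - w := by field_simp; ring
  rw [e3] at k1'
  rw [e4] at k2'
  nlinarith [k1', k2']

lemma binEntropy_le_log_two' {x : ℝ} (h0 : 0 ≤ x) (h1 : x ≤ 1) :
    binEntropy x ≤ log 2 := Real.binEntropy_le_log_two

/-- two-point log-sum inequality. -/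
lemma logsum {l u₁ u₂ t₁ t₂ : ℝ} (hl0 : 0 ≤ l) (hl1 : l ≤ 1)
    (hu₁ : 0 ≤ u₁) (hu₂ : 0 ≤ u₂) (ht₁ : 0 < t₁) (ht₂ : 0 < t₂) :
    (l*u₁+(1-l)*u₂) * log ((l*u₁+(1-l)*u₂)/(l*t₁+(1-l)*t₂)) ≤
      l * (u₁ * log (u₁/t₁)) + (1-l) * (u₂ * log (u₂/t₂)) := by
  set U := l*u₁+(1-l)*u₂ with hU
  set T := l*t₁+(1-l)*t₂ with hT
  have hTpos : 0 < T := by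
    rw [hT]
    rcases eq_or_lt_of_le hl0 with h | h
    · rw [← h]
      simpa using ht₂
    · have h2 := mul_pos h ht₁
      have h3 : 0 ≤ (1-l)*t₂ := mul_nonneg (by linarith) ht₂.le
      linarith
  have hUnn : 0 ≤ U :=
    add_nonneg (mul_nonneg hl0 hu₁) (mul_nonneg (by linarith) hu₂)
  rcases eq_or_lt_of_le hUnn with h | hUpos
  · -- U = 0
    have h1 : l * u₁ = 0 := by nlinarith [mul_nonneg hl0 hu₁, mul_nonneg (by linarith : (0:ℝ) ≤ 1-l) hu₂]
    have h2 : (1-l) * u₂ = 0 := by nlinarith [mul_nonneg hl0 hu₁, mul_nonneg (by linarith : (0:ℝ) ≤ 1-l) hu₂]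
    have e1 : l * (u₁ * log (u₁/t₁)) = 0 := by
      rcases mul_eq_zero.1 h1 with h | h
      · rw [h]; ring
      · rw [h]; simp
    have e2 : (1-l) * (u₂ * log (u₂/t₂)) = 0 := by
      rcases mul_eq_zero.1 h2 with h | h
      · rw [h]; ring
      · rw [h]; simp
    rw [← h, e1, e2]
    simp
  · -- U > 0
    have key : ∀ (c u t : ℝ), 0 ≤ c → 0 ≤ u → 0 < t →
        c*u*log (U/T) + c*u - c*t*U/T ≤ c * (u * log (u/t)) := by
      intro c u t hc hu ht
      rcases eq_or_lt_of_le hc with h | hc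
      · rw [← h]; simp
      rcases eq_or_lt_of_le hu with h | hu
      · rw [← h]
        have hge : (0:ℝ) ≤ c*t*U/T :=
          div_nonneg (mul_nonneg (mul_nonneg hc.le ht.le) hUnn) hTpos.le
        simp only [mul_zero, zero_mul]
        linarith
      -- u > 0
      have hlog : log (u*T/(t*U)) ≥ 1 - (t*U)/(u*T) := by
        have := log_le_sub_one_of_pos (x := (t*U)/(u*T)) (by positivity)
        have e : log (t*U/(u*T)) = - log (u*T/(t*U)) := by
          rw [← log_inv]
          congr 1
          field_simp
        rw [e] at this
        linarith
      have e5 : log (u/t) = log (u*T/(t*U)) + log (U/T) := by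
        rw [← log_mul (by positivity) (by positivity)]
        congr 1
        field_simp
      have step : u * log (u/t) ≥ u * log (U/T) + u - t*U/T := by
        have h6 : u * log (u*T/(t*U)) ≥ u * (1 - (t*U)/(u*T)) := by
          exact mul_le_mul_of_nonneg_left hlog hu.le
        have e7 : u * (1 - (t*U)/(u*T)) = u - t*U/T := by
          field_simp
        rw [e5, mul_add]
        nlinarith [h6, e7]
      calc c*u*log (U/T) + c*u - c*t*U/T = c * (u * log (U/T) + u - t*U/T) := by ring
        _ ≤ c * (u * log (u/t)) := by
            apply mul_le_mul_of_nonneg_left _ hc.le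
            linarith
    have k1 := key l u₁ t₁ hl0 hu₁ ht₁
    have k2 := key (1-l) u₂ t₂ (by linarith) hu₂ ht₂
    have esum : l*u₁*log (U/T) + l*u₁ - l*t₁*U/T
        + ((1-l)*u₂*log (U/T) + (1-l)*u₂ - (1-l)*t₂*U/T) = U * log (U/T) := by
      have : l*t₁*U/T + (1-l)*t₂*U/T = U := by
        field_simp
        ring
      have hUe : l*u₁ + (1-l)*u₂ = U := hU.symm
      nlinarith [this, hUe]
    nlinarith [k1, k2, esum]

noncomputable def Dkl (s t : ℝ) : ℝ := -binEntropy s - s * log t - (1-s) * log (1-t)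

lemma Dkl_alt {s t : ℝ} (hs0 : 0 ≤ s) (hs1 : s ≤ 1) (ht0 : 0 < t) (ht1 : t < 1) :
    Dkl s t = s * log (s/t) + (1-s) * log ((1-s)/(1-t)) := by
  have h1t : (0:ℝ) < 1 - t := by linarith
  rcases eq_or_lt_of_le hs0 with h | hs0'
  · rw [← h]
    simp [Dkl, log_div one_ne_zero h1t.ne']
  rcases eq_or_lt_of_le hs1 with h | hs1'
  · rw [h]
    simp [Dkl, log_div one_ne_zero ht0.ne']
  have h1s : (0:ℝ) < 1 - s := by linarith
  rw [Dkl, binEntropy_expand, log_div hs0'.ne' ht0.ne', log_div h1s.ne' h1t.ne']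
  ring

lemma Dkl_convex {l u₁ u₂ t₁ t₂ : ℝ} (hl0 : 0 ≤ l) (hl1 : l ≤ 1)
    (hu₁0 : 0 ≤ u₁) (hu₁1 : u₁ ≤ 1) (hu₂0 : 0 ≤ u₂) (hu₂1 : u₂ ≤ 1)
    (ht₁0 : 0 < t₁) (ht₁1 : t₁ < 1) (ht₂0 : 0 < t₂) (ht₂1 : t₂ < 1) :
    Dkl (l*u₁+(1-l)*u₂) (l*t₁+(1-l)*t₂) ≤ l * Dkl u₁ t₁ + (1-l) * Dkl u₂ t₂ := by
  have hU0 : 0 ≤ l*u₁+(1-l)*u₂ := add_nonneg (mul_nonneg hl0 hu₁0) (mul_nonneg (by linarith) hu₂0)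
  have hU1 : l*u₁+(1-l)*u₂ ≤ 1 := by nlinarith
  have hT0 : 0 < l*t₁+(1-l)*t₂ := by
    rcases eq_or_lt_of_le hl0 with h | h
    · rw [← h]; simpa using ht₂0
    · have h2 := mul_pos h ht₁0
      have h3 : 0 ≤ (1-l)*t₂ := mul_nonneg (by linarith) ht₂0.le
      linarith
  have hT1 : l*t₁+(1-l)*t₂ < 1 := by
    rcases eq_or_lt_of_le hl0 with h | h
    · rw [← h]; simpa using ht₂1
    · nlinarith [mul_lt_mul_of_pos_left ht₁1 h,
        mul_le_mul_of_nonneg_left ht₂1.le (by linarith : (0:ℝ) ≤ 1-l)]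
  rw [Dkl_alt hU0 hU1 hT0 hT1, Dkl_alt hu₁0 hu₁1 ht₁0 ht₁1, Dkl_alt hu₂0 hu₂1 ht₂0 ht₂1]
  have k1 := logsum hl0 hl1 hu₁0 hu₂0 ht₁0 ht₂0
  have k2 := logsum hl0 hl1 (by linarith : (0:ℝ) ≤ 1-u₁) (by linarith : (0:ℝ) ≤ 1-u₂)
    (by linarith : (0:ℝ) < 1-t₁) (by linarith : (0:ℝ) < 1-t₂)
  have e1 : 1-(l*u₁+(1-l)*u₂) = l*(1-u₁)+(1-l)*(1-u₂) := by ring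
  have e2 : 1-(l*t₁+(1-l)*t₂) = l*(1-t₁)+(1-l)*(1-t₂) := by ring
  rw [e1, e2]
  linarith [k1, k2]

lemma Id1 {a s₀ s₁ t : ℝ} (ht : t = (1-a)*s₀ + a*s₁) :
    (1-a) * Dkl s₀ t + a * Dkl s₁ t
      = binEntropy t - (1-a)*binEntropy s₀ - a*binEntropy s₁ := by
  subst ht
  simp only [Dkl, binEntropy_expand]
  ring

/-- channel convexity step: mutual information of the BAC is at most the
mixture of those of the Z- and S-channels. -/
lemma CC {p n a : ℝ} (hp0 : 0 < p) (hp1 : p < 1) (hn0 : 0 ≤ n) (hn1 : n ≤ 1)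
    (ha0 : 0 < a) (ha1 : a < 1) :
    binEntropy (1-p*n-a*(1-p)) - (1-a)*binEntropy (p*n) - a*binEntropy (p*(1-n))
      ≤ (1-n)*(binEntropy (1-a*(1-p)) - a*binEntropy p)
        + n*(binEntropy ((1-a)*(1-p)) - (1-a)*binEntropy p) := by
  have hyZ0 : 0 < 1-a*(1-p) := by nlinarith
  have hyZ1 : 1-a*(1-p) < 1 := by nlinarith
  have hyS0 : 0 < (1-a)*(1-p) := by nlinarith
  have hyS1 : (1-a)*(1-p) < 1 := by nlinarith
  have idW : (1-a) * Dkl (1-p*n) (1-p*n-a*(1-p)) + a * Dkl (p*(1-n)) (1-p*n-a*(1-p))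
      = binEntropy (1-p*n-a*(1-p)) - (1-a)*binEntropy (1-p*n) - a*binEntropy (p*(1-n)) := by
    apply Id1; ring
  have idZ : (1-a) * Dkl 1 (1-a*(1-p)) + a * Dkl p (1-a*(1-p))
      = binEntropy (1-a*(1-p)) - (1-a)*binEntropy 1 - a*binEntropy p := by
    apply Id1; ring
  have idS : (1-a) * Dkl (1-p) ((1-a)*(1-p)) + a * Dkl 0 ((1-a)*(1-p))
      = binEntropy ((1-a)*(1-p)) - (1-a)*binEntropy (1-p) - a*binEntropy 0 := by
    apply Id1; ring
  have conv0 : Dkl (1-p*n) (1-p*n-a*(1-p))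
      ≤ (1-n) * Dkl 1 (1-a*(1-p)) + (1-(1-n)) * Dkl (1-p) ((1-a)*(1-p)) := by
    have e1 : 1-p*n = (1-n)*1+(1-(1-n))*(1-p) := by ring
    have e2 : 1-p*n-a*(1-p) = (1-n)*(1-a*(1-p))+(1-(1-n))*((1-a)*(1-p)) := by ring
    rw [e2, e1]
    exact Dkl_convex (by linarith) (by linarith) (by norm_num) le_rfl
      (by linarith) (by linarith) hyZ0 hyZ1 hyS0 hyS1
  have conv1 : Dkl (p*(1-n)) (1-p*n-a*(1-p))
      ≤ (1-n) * Dkl p (1-a*(1-p)) + (1-(1-n)) * Dkl 0 ((1-a)*(1-p)) := by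
    have e1 : p*(1-n) = (1-n)*p+(1-(1-n))*0 := by ring
    have e2 : 1-p*n-a*(1-p) = (1-n)*(1-a*(1-p))+(1-(1-n))*((1-a)*(1-p)) := by ring
    rw [e2, e1]
    exact Dkl_convex (by linarith) (by linarith) (by linarith) (by linarith)
      le_rfl (by norm_num) hyZ0 hyZ1 hyS0 hyS1
  have conv0' := mul_le_mul_of_nonneg_left conv0 (by linarith : (0:ℝ) ≤ 1-a)
  have conv1' := mul_le_mul_of_nonneg_left conv1 ha0.le
  have sum : (1-a) * Dkl (1-p*n) (1-p*n-a*(1-p)) + a * Dkl (p*(1-n)) (1-p*n-a*(1-p))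
      ≤ (1-n) * ((1-a) * Dkl 1 (1-a*(1-p)) + a * Dkl p (1-a*(1-p)))
        + n * ((1-a) * Dkl (1-p) ((1-a)*(1-p)) + a * Dkl 0 ((1-a)*(1-p))) := by
    nlinarith [conv0', conv1']
  rw [idW, idZ, idS] at sum
  simp only [binEntropy_one, binEntropy_zero, mul_zero, sub_zero] at sum
  rw [binEntropy_one_sub (p*n)] at sum
  rw [binEntropy_one_sub p] at sum
  linarith [sum]

lemma q_identity {t : ℝ} (h0 : 0 ≤ t) (h1 : t < 1) :
    log 2 - binEntropy ((1-t)/2) = ((1+t)*log (1+t) + (1-t)*log (1-t))/2 := by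
  have h1t : (0:ℝ) < 1 - t := by linarith
  have h1t' : (0:ℝ) < 1 + t := by linarith
  rw [binEntropy_expand]
  have e0 : 1 - (1-t)/2 = (1+t)/2 := by ring
  rw [e0]
  rw [show (1-t)/2 = (1-t)/2 from rfl]
  rw [log_div h1t.ne' two_ne_zero, log_div h1t'.ne' two_ne_zero]
  ring

lemma he_le_xlog {x : ℝ} (h0 : 0 < x) (h1 : x < 1) :
    binEntropy x ≤ x * (1 - log x) := by
  have h1x : (0:ℝ) < 1 - x := by linarith
  have k := one_sub_inv_le_log_of_pos h1x
  have k2 : (1-x) * log (1-x) ≥ (1-x) * (1 - (1-x)⁻¹) := by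
    exact mul_le_mul_of_nonneg_left k h1x.le
  have e : (1-x) * (1 - (1-x)⁻¹) = -x := by
    field_simp
    ring
  rw [e] at k2
  rw [binEntropy_expand]
  nlinarith [k2]

lemma binE_mono {x y : ℝ} (h0 : 0 ≤ x) (hxy : x ≤ y) (hy : y ≤ 1/2) :
    binEntropy x ≤ binEntropy y := by
  have := Real.binEntropy_strictMonoOn.monotoneOn
    (a := x) (b := y) ⟨h0, by norm_num; linarith⟩ ⟨by linarith, by norm_num; linarith⟩ hxy
  exact this

/-- the Z-channel bound, given the core single-variable inequality Z3. -/
lemma Zbound {p b : ℝ} (hp0 : 0 < p) (hp1 : p < 1) (hb0 : 0 ≤ b) (hb1 : b ≤ 1)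
    (hZ3 : log (1 + exp (-(binEntropy p/(1-p)))) ≤ log 2 - binEntropy ((1-sqrt (1-p))/2)) :
    binEntropy (1 - b*(1-p)) - b * binEntropy p ≤ log 2 - binEntropy ((1-sqrt (1-p))/2) := by
  set E := exp (-(binEntropy p/(1-p))) with hE
  have hEpos : 0 < E := exp_pos _
  have hw0 : 0 < E/(1+E) := by positivity
  have hw1 : E/(1+E) < 1 := by
    rw [div_lt_one (by linarith)]
    linarith
  have h1p : (0:ℝ) < 1 - p := by linarith
  have hξ0 : 0 ≤ b*(1-p) := mul_nonneg hb0 h1p.le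
  have hξ1 : b*(1-p) ≤ 1 := by nlinarith
  have hg := gibbs hξ0 hξ1 hw0 hw1
  have e1 : binEntropy (1 - b*(1-p)) = binEntropy (b*(1-p)) := by
    rw [← binEntropy_one_sub (b*(1-p))]
  have elogw : log (E/(1+E)) = -(binEntropy p/(1-p)) - log (1+E) := by
    rw [log_div hEpos.ne' (by linarith : (1:ℝ)+E ≠ 0), hE, log_exp]
  have elog1w : log (1 - E/(1+E)) = -log (1+E) := by
    have e : 1 - E/(1+E) = (1+E)⁻¹ := by
      field_simp
      ring
    rw [e, log_inv]
  rw [elogw, elog1w] at hg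
  have hfinal : binEntropy (b*(1-p)) ≤ b * binEntropy p + log (1+E) := by
    have e2 : -(b*(1-p) * (-(binEntropy p/(1-p)) - log (1+E)))
        - (1-b*(1-p)) * (-log (1+E)) = b * binEntropy p + log (1+E) := by
      field_simp
      ring
    rw [e2] at hg
    exact hg
  rw [e1]
  linarith [hfinal, hZ3]

lemma sumexp {x : ℝ} (hx : 0 ≤ x) : 1 + x + x^2/2 + x^3/6 + x^4/24 ≤ exp x := by
  have h := Real.sum_le_exp_of_nonneg hx 5
  rw [Finset.sum_range_succ, Finset.sum_range_succ, Finset.sum_range_succ,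
    Finset.sum_range_succ, Finset.sum_range_succ, Finset.sum_range_zero] at h
  norm_num [Nat.factorial] at h
  linarith [h]

lemma Eeq {p : ℝ} (hp0 : 0 < p) (hp1 : p < 1) :
    exp (-(binEntropy p/(1-p))) = (1-p) * exp (p * log p/(1-p)) := by
  have h1p : (0:ℝ) < 1 - p := by linarith
  rw [binEntropy_expand]
  rw [show -((-(p*log p) - (1-p)*log (1-p))/(1-p)) = p*log p/(1-p) + log (1-p) from by
    field_simp; ring]
  rw [exp_add, exp_log h1p]
  ring

lemma Ebound {p₁ r B : ℝ} (hp₁0 : 0 < p₁) (hp₁1 : p₁ < 1) (hr : log p₁ ≤ -r) (hr0 : 0 ≤ r)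
    (hB0 : 0 ≤ B)
    (hB : 1 - p₁ ≤ B * (1 + (p₁*r/(1-p₁)) + (p₁*r/(1-p₁))^2/2 + (p₁*r/(1-p₁))^3/6
      + (p₁*r/(1-p₁))^4/24)) :
    exp (-(binEntropy p₁/(1-p₁))) ≤ B := by
  have h1p : (0:ℝ) < 1 - p₁ := by linarith
  set ρ := p₁*r/(1-p₁) with hρ
  have hρ0 : 0 ≤ ρ := by positivity
  have hv : p₁ * log p₁/(1-p₁) ≤ -ρ := by
    have h2 : p₁ * log p₁ ≤ p₁ * (-r) := mul_le_mul_of_nonneg_left hr hp₁0.le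
    have h3 : p₁ * log p₁ / (1-p₁) ≤ (p₁*(-r))/(1-p₁) := (div_le_div_iff_of_pos_right h1p).2 h2
    have h4 : (p₁*(-r))/(1-p₁) = -ρ := by rw [hρ]; ring
    linarith
  have hS := sumexp hρ0
  have hSpos : (0:ℝ) < 1 + ρ + ρ^2/2 + ρ^3/6 + ρ^4/24 := by positivity
  have hexp : exp (p₁ * log p₁/(1-p₁)) ≤ (1 + ρ + ρ^2/2 + ρ^3/6 + ρ^4/24)⁻¹ := by
    have e1 : exp (p₁ * log p₁/(1-p₁)) ≤ exp (-ρ) := exp_le_exp.2 hv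
    rw [exp_neg] at e1
    exact e1.trans (inv_anti₀ hSpos hS)
  rw [Eeq hp₁0 hp₁1]
  calc (1-p₁) * exp (p₁ * log p₁/(1-p₁)) ≤ (1-p₁) * (1 + ρ + ρ^2/2 + ρ^3/6 + ρ^4/24)⁻¹ :=
        mul_le_mul_of_nonneg_left hexp h1p.le
    _ ≤ B := by
        rw [mul_inv_le_iff₀ hSpos]
        linarith [hB]

/-- generic chunk lemma for the middle region -/
lemma chunk {p p₁ p₂ B : ℝ} (hp₁0 : 0 < p₁) (hp₂1 : p₂ < 1) (h1 : p₁ ≤ p) (h2 : p ≤ p₂)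
    (hEB : exp (-(binEntropy p₁/(1-p₁))) ≤ B) (hB0 : 0 ≤ B)
    (hnum : B - B^2/2 + B^3/3 - B^4/4 + B^5/5
      ≤ ((1-p₂) + (1-p₂)^2/6 + (1-p₂)^3/15 + (1-p₂)^4/28 + (1-p₂)^5/45)/2) :
    log (1 + exp (-(binEntropy p/(1-p))))
      ≤ ((1-p) + (1-p)^2/6 + (1-p)^3/15 + (1-p)^4/28 + (1-p)^5/45)/2 := by
  have hp1 : p < 1 := lt_of_le_of_lt h2 hp₂1
  have hEmono : exp (-(binEntropy p/(1-p))) ≤ exp (-(binEntropy p₁/(1-p₁))) := by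
    apply exp_le_exp.2
    have := binEntropy_div_mono hp₁0 h1 hp1
    linarith
  have hE0 : 0 < exp (-(binEntropy p/(1-p))) := exp_pos _
  have step1 : log (1 + exp (-(binEntropy p/(1-p)))) ≤ log (1 + B) := by
    apply log_le_log (by linarith)
    linarith [hEmono, hEB]
  have step2 : log (1 + B) ≤ B - B^2/2 + B^3/3 - B^4/4 + B^5/5 := log1p_le_poly5 hB0
  have step3 : ((1-p₂) + (1-p₂)^2/6 + (1-p₂)^3/15 + (1-p₂)^4/28 + (1-p₂)^5/45)/2
      ≤ ((1-p) + (1-p)^2/6 + (1-p)^3/15 + (1-p)^4/28 + (1-p)^5/45)/2 := by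
    have hx : (0:ℝ) ≤ 1 - p₂ := by linarith
    have hxy : 1 - p₂ ≤ 1 - p := by linarith
    nlinarith [pow_le_pow_left₀ hx hxy 2, pow_le_pow_left₀ hx hxy 3,
      pow_le_pow_left₀ hx hxy 4, pow_le_pow_left₀ hx hxy 5]
  linarith

-- numeric logarithm bounds
lemma l54lo : (167/750 : ℝ) ≤ log (5/4) := by
  have h := poly3_le_neg_log (t := 1/5) (by norm_num) (by norm_num)
  have e : -log (1 - 1/5 : ℝ) = log (5/4) := by
    rw [show (1 - 1/5 : ℝ) = (5/4)⁻¹ by norm_num, log_inv]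
    ring
  rw [e] at h
  norm_num at h ⊢
  linarith

lemma l32hi : log (3/2) ≤ (65/162 : ℝ) + (1/81)/(8/3) := by
  have h := neg_log_le_poly3_tail (t := 1/3) (by norm_num) (by norm_num)
  have e : -log (1 - 1/3 : ℝ) = log (3/2) := by
    rw [show (1 - 1/3 : ℝ) = (3/2)⁻¹ by norm_num, log_inv]
    ring
  rw [e] at h
  norm_num at h ⊢
  linarith

lemma l87lo : (205/1536 : ℝ) ≤ log (8/7) := by
  have h := poly3_le_neg_log (t := 1/8) (by norm_num) (by norm_num)
  have e : -log (1 - 1/8 : ℝ) = log (8/7) := by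
    rw [show (1 - 1/8 : ℝ) = (8/7)⁻¹ by norm_num, log_inv]
    ring
  rw [e] at h
  norm_num at h ⊢
  linarith

lemma regionC {p : ℝ} (hp : 11/20 ≤ p) (hp1 : p < 1) :
    log (1 + exp (-(binEntropy p/(1-p))))
      ≤ ((1-p) + (1-p)^2/6 + (1-p)^3/15 + (1-p)^4/28 + (1-p)^5/45)/2 := by
  have hp0 : (0:ℝ) < p := by linarith
  have h1p : (0:ℝ) < 1 - p := by linarith
  have hpoly := poly3_le_neg_log (t := 1-p) h1p.le (by linarith)
  rw [show (1:ℝ) - (1-p) = p by ring] at hpoly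
  have hv : p * log p/(1-p) ≤ -log 2 := by
    rw [div_le_iff₀ h1p]
    have hX : log p ≤ -((1-p) + (1-p)^2/2 + (1-p)^3/3) := by linarith
    have h2 : p * log p ≤ p * (-((1-p) + (1-p)^2/2 + (1-p)^3/3)) :=
      mul_le_mul_of_nonneg_left hX hp0.le
    have hln2 : log 2 < 0.6931471808 := log_two_lt_d9
    have hx2 : (1-p)^2 ≤ (9/20)^2 := pow_le_pow_left₀ h1p.le (by linarith) 2
    have hx3 : (1-p)^3 ≤ (9/20)^3 := pow_le_pow_left₀ h1p.le (by linarith) 3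
    have hpi2 : log 2 ≤ p * (1 + (1-p)/2 + (1-p)^2/3) := by nlinarith [hx2, hx3, hln2]
    have h3 := mul_le_mul_of_nonneg_left hpi2 h1p.le
    nlinarith [h2, h3]
  have hEhalf : exp (-(binEntropy p/(1-p))) ≤ (1-p)/2 := by
    rw [Eeq hp0 hp1]
    have h2 : exp (p * log p/(1-p)) ≤ exp (-log 2) := exp_le_exp.2 hv
    rw [exp_neg, exp_log two_pos] at h2
    calc (1-p) * exp (p * log p/(1-p)) ≤ (1-p) * 2⁻¹ := mul_le_mul_of_nonneg_left h2 h1p.le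
      _ = (1-p)/2 := by ring
  have hE0 : (0:ℝ) < exp (-(binEntropy p/(1-p))) := exp_pos _
  have hlog : log (1 + exp (-(binEntropy p/(1-p)))) ≤ exp (-(binEntropy p/(1-p))) := by
    have := log_le_sub_one_of_pos (show (0:ℝ) < 1 + exp (-(binEntropy p/(1-p))) by linarith)
    linarith
  have h2 : (0:ℝ) ≤ (1-p)^2/6 := by positivity
  have h3 : (0:ℝ) ≤ (1-p)^3/15 := by positivity
  have h4 : (0:ℝ) ≤ (1-p)^4/28 := by positivity
  have h5 : (0:ℝ) ≤ (1-p)^5/45 := by positivity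
  linarith

lemma exp_neg_two_lt : exp (-2 : ℝ) ≤ 0.135336 := by
  have h1 : (2.7182818283:ℝ) < exp 1 := exp_one_gt_d9
  have h2 : exp (2:ℝ) = exp 1 * exp 1 := by
    rw [← exp_add]; norm_num
  have h3 : (7.389056:ℝ) ≤ exp 2 := by nlinarith [h1, h2]
  have h4 : exp (-2:ℝ) = (exp 2)⁻¹ := by rw [exp_neg]
  rw [h4]
  rw [inv_le_comm₀ ((by positivity : (0:ℝ) < exp 2)) (by norm_num)]
  calc (0.135336:ℝ)⁻¹ ≤ 7.389056 := by norm_num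
    _ ≤ exp 2 := h3

lemma log3710 : log (37/10 : ℝ) ≤ 1.308813 := by
  have e37 : log (37/10 : ℝ) = log (1 + 5/32) + 2*log 2 - log (5/4) := by
    rw [show (37/10:ℝ) = (1 + 5/32)*2^2/(5/4) by norm_num,
      log_div (by norm_num) (by norm_num), log_mul (by norm_num) (by norm_num), log_pow]
    push_cast; ring
  have h1 := log1p_le_poly5 (x := (5/32:ℝ)) (by norm_num)
  have h2 : log 2 < 0.6931471808 := log_two_lt_d9
  have h3 := l54lo
  rw [e37]
  norm_num at h1 ⊢
  linarith

lemma regionA {p : ℝ} (hp0 : 0 < p) (hp : p ≤ 1/4) :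
    log (1 + exp (-(binEntropy p/(1-p))))
      ≤ log 2 - binEntropy ((1-sqrt (1-p))/2) := by
  have hp1 : p < 1 := by linarith
  have h1p : (0:ℝ) < 1 - p := by linarith
  set E := exp (-(binEntropy p/(1-p))) with hE
  have hE0 : 0 < E := exp_pos _
  -- tangent line bound at 1 for log
  have htan : log (1 + E) ≤ log 2 + (E-1)/2 := by
    have h2 : log ((1+E)/2) ≤ (1+E)/2 - 1 := log_le_sub_one_of_pos (by positivity)
    rw [log_div (by positivity) two_ne_zero] at h2
    linarith
  -- sqrt facts
  have ht2 : sqrt (1-p)^2 = 1-p := sq_sqrt h1p.le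
  have htnn : 0 ≤ sqrt (1-p) := sqrt_nonneg _
  have ht85 : 17/20 ≤ sqrt (1-p) := by nlinarith [ht2, htnn]
  have ht1 : sqrt (1-p) ≤ 1 := by nlinarith [ht2, htnn]
  -- q ≤ (10/37) p
  have hqk : (1 - sqrt (1-p))/2 ≤ 10/37*p := by
    nlinarith [mul_nonneg (by linarith : (0:ℝ) ≤ 20*sqrt (1-p) - 17)
      (by linarith : (0:ℝ) ≤ 1 - sqrt (1-p)), ht2]
  -- entropy of q bounded
  have hq2 : binEntropy ((1 - sqrt (1-p))/2) ≤ binEntropy (10/37*p) :=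
    binE_mono (by linarith) hqk (by linarith)
  have hkp0 : (0:ℝ) < 10/37*p := by linarith
  have hkp1 : (10:ℝ)/37*p < 1 := by linarith
  have hq3 : binEntropy (10/37*p) ≤ (10/37*p) * (1 - log (10/37*p)) := he_le_xlog hkp0 hkp1
  have hlogsplit : log (10/37*p) = log (10/37) + log p := log_mul (by norm_num) hp0.ne'
  have hl37 : -log (10/37 : ℝ) ≤ 1.308813 := by
    have e : log (10/37 : ℝ) = -log (37/10) := by
      rw [show (10/37:ℝ) = (37/10)⁻¹ by norm_num, log_inv]
    rw [e]
    simpa using log3710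
  -- lower bound on L = -log p
  have hL : 1.3862943606 ≤ -log p := by
    have h1 : log p ≤ log (1/4 : ℝ) := log_le_log hp0 hp
    have h2 : log (1/4 : ℝ) = -(2*log 2) := by
      rw [show (1/4:ℝ) = ((2:ℝ)^2)⁻¹ by norm_num, log_inv, log_pow]
      push_cast; ring
    have h3 : (0.6931471803:ℝ) < log 2 := log_two_gt_d9
    rw [h2] at h1
    linarith
  have hlp : log p < 0 := log_neg hp0 hp1
  -- p L^2 ≤ 4 exp(-2) ≤ 0.541344
  have hpL2 : p * (log p)^2 ≤ 0.541344 := by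
    have hehalf : (-log p)/2 ≤ exp ((-log p)/2 - 1) := by
      have := add_one_le_exp ((-log p)/2 - 1)
      linarith
    have hsq : ((-log p)/2)^2 ≤ exp ((-log p)/2 - 1)^2 := by
      have h0 : (0:ℝ) ≤ (-log p)/2 := by linarith
      exact pow_le_pow_left₀ h0 hehalf 2
    have hexp2 : exp ((-log p)/2 - 1)^2 = exp ((-log p) - 2) := by
      rw [sq, ← exp_add]
      ring_nf
    have hpe : p = exp (log p) := (exp_log hp0).symm
    have hcomb : p * (log p)^2 ≤ exp (log p) * (4 * exp ((-log p) - 2)) := by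
      rw [← hpe]
      have h4 : (log p)^2 = 4 * ((-log p)/2)^2 := by ring
      rw [h4]
      have := mul_le_mul_of_nonneg_left (hsq.trans_eq hexp2) (by positivity : (0:ℝ) ≤ 4*p)
      nlinarith [this]
    have he2 : exp (log p) * (4 * exp ((-log p) - 2)) = 4 * exp (-2 : ℝ) := by
      rw [show exp (log p) * (4 * exp ((-log p) - 2)) = 4 * (exp (log p) * exp ((-log p) - 2)) by ring,
        ← exp_add]
      ring_nf
    rw [he2] at hcomb
    have := exp_neg_two_lt
    linarith
  -- quadratic bound on E
  have hvneg : p * log p/(1-p) ≤ 0 := by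
    apply div_nonpos_of_nonpos_of_nonneg _ h1p.le
    exact mul_nonpos_of_nonneg_of_nonpos hp0.le hlp.le
  have hEbound : E ≤ (1-p) + p*log p + p^2*(log p)^2/(2*(1-p)) := by
    rw [hE, Eeq hp0 hp1]
    have hq4 := exp_le_quad_of_nonpos hvneg
    have e : (1-p) * (1 + p*log p/(1-p) + (p*log p/(1-p))^2/2)
        = (1-p) + p*log p + p^2*(log p)^2/(2*(1-p)) := by
      field_simp
    calc (1-p) * exp (p*log p/(1-p)) ≤ (1-p) * (1 + p*log p/(1-p) + (p*log p/(1-p))^2/2) :=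
          mul_le_mul_of_nonneg_left hq4 h1p.le
      _ = _ := e
  -- main numeric comparison
  have hkey : binEntropy ((1 - sqrt (1-p))/2) ≤ (1 - E)/2 := by
    have hq5 : binEntropy ((1 - sqrt (1-p))/2) ≤ 10/37*p * (1 + 1.308813 + (-log p)) := by
      have : (10/37*p) * (1 - log (10/37*p)) ≤ 10/37*p * (1 + 1.308813 + (-log p)) := by
        apply mul_le_mul_of_nonneg_left _ (by linarith : (0:ℝ) ≤ 10/37*p)
        rw [hlogsplit]
        linarith [hl37]
      linarith [hq2, hq3]
    -- (1-E)/2 ≥ (p + p(-log p) - p^2 (log p)^2/(2(1-p)))/2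
    have hE2 : (1 - E)/2 ≥ (p - p*log p - p^2*(log p)^2/(2*(1-p)))/2 := by
      linarith [hEbound]
    -- p^2 L^2/(2(1-p)) ≤ 0.360896 p  (since 2(1-p) ≥ 3/2 and pL² ≤ 0.541344)
    have hterm : p^2*(log p)^2/(2*(1-p)) ≤ 0.360896 * p := by
      have h1 : p^2*(log p)^2 ≤ 0.541344*p := by
        have := mul_le_mul_of_nonneg_left hpL2 hp0.le
        nlinarith [this]
      have h2 : p^2*(log p)^2/(2*(1-p)) ≤ p^2*(log p)^2/(3/2) := by
        apply div_le_div_of_nonneg_left (by positivity) (by norm_num) (by linarith)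
      have h3 : p^2*(log p)^2/(3/2) = (2/3) * (p^2*(log p)^2) := by ring
      rw [h3] at h2
      linarith
    have hlin : 10/37 * (1 + 1.308813 + (-log p)) + 0.180448 ≤ 1/2 + (-log p)/2 := by
      linarith [hL]
    have hlin' := mul_le_mul_of_nonneg_left hlin hp0.le
    nlinarith [hq5, hE2, hterm, hlin']
  linarith [htan, hkey]

lemma logp14 : log (1/4 : ℝ) ≤ -(1.3862943606) := by
  have h2 : log (1/4 : ℝ) = -(2*log 2) := by
    rw [show (1/4:ℝ) = ((2:ℝ)^2)⁻¹ by norm_num, log_inv, log_pow]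
    push_cast; ring
  have h3 : (0.6931471803:ℝ) < log 2 := log_two_gt_d9
  rw [h2]; linarith

lemma logp310 : log (3/10 : ℝ) ≤ -(1.203090) := by
  have e : log (3/10 : ℝ) = log (3/2) - log (5/4) - 2*log 2 := by
    rw [show (3/10:ℝ) = (3/2)/((5/4)*2^2) by norm_num,
      log_div (by norm_num) (by norm_num), log_mul (by norm_num) (by norm_num), log_pow]
    push_cast; ring
  have h3 : (0.6931471803:ℝ) < log 2 := log_two_gt_d9
  have := l32hi; have := l54lo
  rw [e]
  norm_num at *
  try linarith

lemma logp720 : log (7/20 : ℝ) ≤ -(1.049277) := by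
  have e : log (7/20 : ℝ) = -(log 2 + log (8/7) + log (5/4)) := by
    rw [show (7/20:ℝ) = (2*((8/7)*(5/4)))⁻¹ by norm_num, log_inv,
      log_mul (by norm_num) (by norm_num), log_mul (by norm_num) (by norm_num)]
    try ring
  have h3 : (0.6931471803:ℝ) < log 2 := log_two_gt_d9
  have := l87lo; have := l54lo
  rw [e]
  norm_num at *
  try linarith

lemma logp25 : log (2/5 : ℝ) ≤ -(0.915813) := by
  have e : log (2/5 : ℝ) = -(log 2 + log (5/4)) := by
    rw [show (2/5:ℝ) = (2*(5/4))⁻¹ by norm_num, log_inv,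
      log_mul (by norm_num) (by norm_num)]
    try ring
  have h3 : (0.6931471803:ℝ) < log 2 := log_two_gt_d9
  have := l54lo
  rw [e]
  norm_num at *
  try linarith

lemma logp920 : log (9/20 : ℝ) ≤ -(0.797232) := by
  have e : log (9/20 : ℝ) = 2*log (3/2) - log (5/4) - 2*log 2 := by
    rw [show (9/20:ℝ) = (3/2)^2/((5/4)*2^2) by norm_num,
      log_div (by norm_num) (by norm_num), log_mul (by norm_num) (by norm_num),
      log_pow, log_pow]
    push_cast; ring
  have h3 : (0.6931471803:ℝ) < log 2 := log_two_gt_d9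
  have := l32hi; have := l54lo
  rw [e]
  norm_num at *
  try linarith

lemma logp12 : log (1/2 : ℝ) ≤ -(0.693147) := by
  have h2 : log (1/2 : ℝ) = -log 2 := by
    rw [show (1/2:ℝ) = (2:ℝ)⁻¹ by norm_num, log_inv]
  have h3 : (0.6931471803:ℝ) < log 2 := log_two_gt_d9
  rw [h2]; linarith

lemma Z3 {p : ℝ} (hp0 : 0 < p) (hp1 : p < 1) :
    log (1 + exp (-(binEntropy p/(1-p)))) ≤ log 2 - binEntropy ((1-sqrt (1-p))/2) := by
  have h1p : (0:ℝ) < 1 - p := by linarith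
  have ht2 : sqrt (1-p)^2 = 1-p := sq_sqrt h1p.le
  have htnn : 0 ≤ sqrt (1-p) := sqrt_nonneg _
  have ht1 : sqrt (1-p) < 1 := by nlinarith [ht2, htnn]
  have hRHS : ((1-p) + (1-p)^2/6 + (1-p)^3/15 + (1-p)^4/28 + (1-p)^5/45)/2
      ≤ log 2 - binEntropy ((1-sqrt (1-p))/2) := by
    rw [q_identity htnn ht1]
    have hg := ge_series htnn ht1
    have e4 : sqrt (1-p)^4 = (1-p)^2 := by
      rw [show sqrt (1-p)^4 = (sqrt (1-p)^2)^2 by ring, ht2]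
    have e6 : sqrt (1-p)^6 = (1-p)^3 := by
      rw [show sqrt (1-p)^6 = (sqrt (1-p)^2)^3 by ring, ht2]
    have e8 : sqrt (1-p)^8 = (1-p)^4 := by
      rw [show sqrt (1-p)^8 = (sqrt (1-p)^2)^4 by ring, ht2]
    have e10 : sqrt (1-p)^10 = (1-p)^5 := by
      rw [show sqrt (1-p)^10 = (sqrt (1-p)^2)^5 by ring, ht2]
    rw [ht2, e4, e6, e8, e10] at hg
    linarith
  rcases le_or_gt p (1/4) with hA | hm1
  · exact regionA hp0 hA
  rcases le_or_gt (11/20) p with hC | hm2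
  · exact le_trans (regionC hC hp1) hRHS
  have E1 : exp (-(binEntropy (1/4:ℝ)/(1-1/4))) ≤ 0.47253 :=
    Ebound (by norm_num) (by norm_num) logp14 (by norm_num) (by norm_num) (by norm_num)
  have E2 : exp (-(binEntropy (3/10:ℝ)/(1-3/10))) ≤ 0.41808 :=
    Ebound (by norm_num) (by norm_num) logp310 (by norm_num) (by norm_num) (by norm_num)
  have E3 : exp (-(binEntropy (7/20:ℝ)/(1-7/20))) ≤ 0.36955 :=
    Ebound (by norm_num) (by norm_num) logp720 (by norm_num) (by norm_num) (by norm_num)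
  have E4 : exp (-(binEntropy (2/5:ℝ)/(1-2/5))) ≤ 0.32598 :=
    Ebound (by norm_num) (by norm_num) logp25 (by norm_num) (by norm_num) (by norm_num)
  have E5 : exp (-(binEntropy (9/20:ℝ)/(1-9/20))) ≤ 0.28664 :=
    Ebound (by norm_num) (by norm_num) logp920 (by norm_num) (by norm_num) (by norm_num)
  have E6 : exp (-(binEntropy (1/2:ℝ)/(1-1/2))) ≤ 0.25019 :=
    Ebound (by norm_num) (by norm_num) logp12 (by norm_num) (by norm_num) (by norm_num)
  rcases le_or_gt p (3/10) with h | hm3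
  · exact le_trans (chunk (by norm_num) (by norm_num) hm1.le h E1 (by norm_num) (by norm_num)) hRHS
  rcases le_or_gt p (7/20) with h | hm4
  · exact le_trans (chunk (by norm_num) (by norm_num) hm3.le h E2 (by norm_num) (by norm_num)) hRHS
  rcases le_or_gt p (2/5) with h | hm5
  · exact le_trans (chunk (by norm_num) (by norm_num) hm4.le h E3 (by norm_num) (by norm_num)) hRHS
  rcases le_or_gt p (9/20) with h | hm6
  · exact le_trans (chunk (by norm_num) (by norm_num) hm5.le h E4 (by norm_num) (by norm_num)) hRHS
  rcases le_or_gt p (1/2) with h | hm7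
  · exact le_trans (chunk (by norm_num) (by norm_num) hm6.le h E5 (by norm_num) (by norm_num)) hRHS
  · exact le_trans (chunk (by norm_num) (by norm_num) hm7.le hm2.le E6 (by norm_num) (by norm_num)) hRHS



lemma binH_eq (x : ℝ) : binH x = binEntropy x / log 2 := by
  rw [binH, binEntropy_expand, Real.logb, Real.logb]
  ring

lemma key_nats {p n a : ℝ} (hp0 : 0 ≤ p) (hp1 : p ≤ 1) (hn0 : 0 ≤ n) (hn1 : n ≤ 1)
    (ha0 : 0 ≤ a) (ha1 : a ≤ 1) :
    binEntropy ((1 - p*n) - a*(1-p)) - (1-a)*binEntropy (p*n) - a*binEntropy (p*(1-n))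
      ≤ log 2 - binEntropy ((1 - sqrt (1-p))/2) := by
  rcases eq_or_lt_of_le hp0 with h | hp0'
  · -- p = 0
    rw [← h]
    norm_num [Real.sqrt_one]
    exact binEntropy_le_log_two
  rcases eq_or_lt_of_le hp1 with h | hp1'
  · -- p = 1
    rw [h]
    norm_num [Real.sqrt_zero]
    have e1 : binEntropy (1-n) = binEntropy n := binEntropy_one_sub n
    have e2 : binEntropy (1/2 : ℝ) = log 2 := by
      rw [show (1/2:ℝ) = 2⁻¹ by norm_num]
      exact binEntropy_two_inv
    nlinarith [e2, e1]
  rcases eq_or_lt_of_le ha0 with h | ha0'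
  · -- a = 0
    rw [← h]
    norm_num
    exact binEntropy_le_log_two
  rcases eq_or_lt_of_le ha1 with h | ha1'
  · -- a = 1
    rw [h]
    have e0 : (1 - p*n) - 1*(1-p) = p*(1-n) := by ring
    rw [e0]
    norm_num
    linarith [binEntropy_le_log_two (p := (1 - sqrt (1-p))/2)]
  -- interior case
  have hM := Z3 hp0' hp1'
  have hZa := Zbound hp0' hp1' ha0 ha1 hM
  have hZb := Zbound hp0' hp1' (b := 1-a) (by linarith) (by linarith) hM
  have hSrw : binEntropy ((1-a)*(1-p)) = binEntropy (1 - (1-a)*(1-p)) :=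
    (binEntropy_one_sub _).symm
  have hCC := CC hp0' hp1' hn0 hn1 ha0' ha1'
  have c1 := mul_le_mul_of_nonneg_left hZa (by linarith : (0:ℝ) ≤ 1-n)
  have hZb' : binEntropy ((1-a)*(1-p)) - (1-a) * binEntropy p
      ≤ log 2 - binEntropy ((1-sqrt (1-p))/2) := by
    rw [hSrw]
    exact hZb
  have c2 := mul_le_mul_of_nonneg_left hZb' hn0
  have e3 : (1 - p*n) - a*(1-p) = 1-p*n-a*(1-p) := by ring
  rw [e3]
  nlinarith [hCC, c1, c2]


end BACaux

open BACaux

/-- The capacity of the induced binary asymmetric channel `M₁` (with transition matrix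
`[[1−pn, p(1−n)], [pn, 1−p(1−n)]]`) is at most the capacity `1 − h((1−√(1−p))/2)` of the
induced binary symmetric channel `M₂`. -/
theorem asymmetric_le_symmetric_capacity (p n a : ℝ) (hp : p ∈ Set.Icc (0 : ℝ) 1)
    (hn : n ∈ Set.Icc (0 : ℝ) 1) (ha : a ∈ Set.Icc (0 : ℝ) 1) :
    binH ((1 - p * n) - a * (1 - p)) - (1 - a) * binH (p * n) - a * binH (p * (1 - n)) ≤
      1 - binH ((1 - Real.sqrt (1 - p)) / 2) := by
  obtain ⟨hp0, hp1⟩ := hp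
  obtain ⟨hn0, hn1⟩ := hn
  obtain ⟨ha0, ha1⟩ := ha
  have hlog2 : (0:ℝ) < Real.log 2 := Real.log_pos one_lt_two
  have key := key_nats hp0 hp1 hn0 hn1 ha0 ha1
  simp only [binH_eq]
  have e1 : Real.binEntropy ((1 - p*n) - a*(1-p))/Real.log 2
      - (1-a)*(Real.binEntropy (p*n)/Real.log 2) - a*(Real.binEntropy (p*(1-n))/Real.log 2)
      = (Real.binEntropy ((1 - p*n) - a*(1-p)) - (1-a)*Real.binEntropy (p*n)
        - a*Real.binEntropy (p*(1-n)))/Real.log 2 := by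
    ring
  have e2 : 1 - Real.binEntropy ((1 - Real.sqrt (1-p))/2)/Real.log 2
      = (Real.log 2 - Real.binEntropy ((1 - Real.sqrt (1-p))/2))/Real.log 2 := by
    field_simp
  rw [e1, e2]
  exact (div_le_div_iff_of_pos_right hlog2).2 key
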